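/- (Case α ≠ 0, β = α².) Assume α ≠ 0 and β = α². Then a quadruple of differentiable functions (q¹, q², v¹, v²) satisfies the Hamilton–Cartan system (i) q̇¹ = v¹, (ii) q̇² = v², (iii) v̇¹ = β(q¹−q²) − αv², (iv) αv¹ = β(q¹−q²) if and only if v¹ = q̇¹, v² = q̇² and q̇¹ = α(q¹ − q²); in particular the function q² is left completely arbitrary (no further restriction on q² arises, the system being involutive on this constraint set). -/

import Mathlib

/-- (Case `α ≠ 0`, `β = α²`.) A quadruple of differentiable functions
`(q¹, q², v¹, v²)` satisfies the Hamilton–Cartan system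
(i) `q̇¹ = v¹`, (ii) `q̇² = v²`, (iii) `v̇¹ = β(q¹−q²) − αv²`,
(iv) `αv¹ = β(q¹−q²)` if and only if `v¹ = q̇¹`, `v² = q̇²` and
`q̇¹ = α(q¹ − q²)`; in particular `q²` is left completely arbitrary. -/
theorem stmt9 (α β : ℝ) (hα : α ≠ 0) (hβ : β = α ^ 2) (q1 q2 v1 v2 : ℝ → ℝ)
    (hq1 : Differentiable ℝ q1) (hq2 : Differentiable ℝ q2)
    (hv1 : Differentiable ℝ v1) (hv2 : Differentiable ℝ v2) :
    ((∀ t, deriv q1 t = v1 t) ∧ (∀ t, deriv q2 t = v2 t) ∧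
        (∀ t, deriv v1 t = β * (q1 t - q2 t) - α * v2 t) ∧
        (∀ t, α * v1 t = β * (q1 t - q2 t))) ↔
      ((∀ t, v1 t = deriv q1 t) ∧ (∀ t, v2 t = deriv q2 t) ∧
        (∀ t, deriv q1 t = α * (q1 t - q2 t))) := by
  subst hβ
  constructor
  · rintro ⟨h1, h2, h3, h4⟩
    refine ⟨fun t => (h1 t).symm, fun t => (h2 t).symm, fun t => ?_⟩
    rw [h1 t]
    exact mul_left_cancel₀ hα (by rw [h4 t]; ring)
  · rintro ⟨h1, h2, h3⟩
    refine ⟨fun t => (h1 t).symm, fun t => (h2 t).symm, fun t => ?_, fun t => ?_⟩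
    · have hveq : v1 = fun t => α * (q1 t - q2 t) := by
        funext s; rw [h1 s, h3 s]
      rw [hveq]
      rw [deriv_const_mul _ ((hq1.fun_sub hq2).differentiableAt (x := t)),
        deriv_fun_sub (hq1.differentiableAt) (hq2.differentiableAt),
        h3 t, ← h2 t]
      ring
    · rw [h1 t, h3 t]; ring
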